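/- One proximal-gradient step decreases the ℓ₁-regularized least-squares objective by at least (1/2L)‖G(x)‖², i.e., f(x) − f(x⁺) ≥ (1/2L)‖G(x)‖² where x⁺ = S_{L,λ}(x − g/L), g = Aᵀ(Ax − b), and G(x) = L(x − x⁺), provided ‖A‖²_{op} ≤ L. -/

import Mathlib

open Finset

lemma scalar_key (lam L o t : ℝ) (hlam : 0 ≤ lam) (hL : 0 < L) :
    lam * |t| - lam * |Real.sign o * max (|o| - lam / L) 0|
      - L * (t - o) * (Real.sign o * max (|o| - lam / L) 0 - t)
      ≥ L * (Real.sign o * max (|o| - lam / L) 0 - t)^2 := by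
  have hc : 0 ≤ lam / L := div_nonneg hlam hL.le
  rcases lt_trichotomy o 0 with h | h | h
  · rw [Real.sign_of_neg h, abs_of_neg h]
    rcases le_or_gt (-o) (lam / L) with h2 | h2
    · have hm : max (-o - lam / L) 0 = 0 := max_eq_right (by linarith)
      rw [hm]
      have h1 : -(L * o) ≤ lam := by
        have := (le_div_iff₀ hL).mp h2
        linarith
      have e1 : (lam + L * o) * |t| ≥ 0 :=
        mul_nonneg (by linarith) (abs_nonneg t)
      have e2 : (-(L * o)) * (|t| + t) ≥ 0 :=
        mul_nonneg (by nlinarith) (by linarith [neg_abs_le t])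
      simp only [mul_zero, neg_zero, zero_sub, abs_zero]
      nlinarith [e1, e2]
    · have hm : max (-o - lam / L) 0 = -o - lam / L := max_eq_left (by linarith)
      rw [hm]
      set s : ℝ := -1 * (-o - lam / L) with hs
      have hs0 : s < 0 := by nlinarith
      have hso : L * (s - o) = lam := by rw [hs]; field_simp; ring
      have key : L * (t - o) * (s - t) + L * (s - t)^2 = lam * (s - t) := by
        rw [show L * (t - o) * (s - t) + L * (s - t)^2 = (s - t) * (L * (s - o)) from by
          ring, hso]; ring
      have habs : lam * (-t) ≤ lam * |t| := mul_le_mul_of_nonneg_left (neg_le_abs t) hlam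
      rw [abs_of_neg hs0]
      linarith [key, habs]
  · simp [h]
    nlinarith [abs_nonneg t]
  · rw [Real.sign_of_pos h, abs_of_pos h]
    rcases le_or_gt o (lam / L) with h2 | h2
    · have hm : max (o - lam / L) 0 = 0 := max_eq_right (by linarith)
      rw [hm]
      have h1 : L * o ≤ lam := by
        have := (le_div_iff₀ hL).mp h2
        linarith
      have e1 : (lam - L * o) * |t| ≥ 0 := mul_nonneg (by linarith) (abs_nonneg t)
      have e2 : (L * o) * (|t| - t) ≥ 0 :=
        mul_nonneg (by nlinarith) (by linarith [le_abs_self t])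
      simp only [mul_zero, abs_zero, zero_sub]
      nlinarith [e1, e2]
    · have hm : max (o - lam / L) 0 = o - lam / L := max_eq_left (by linarith)
      rw [hm]
      set s : ℝ := 1 * (o - lam / L) with hs
      have hs0 : 0 < s := by nlinarith
      have hso : L * (s - o) = -lam := by rw [hs]; field_simp; ring
      have key : L * (t - o) * (s - t) + L * (s - t)^2 = -(lam * (s - t)) := by
        rw [show L * (t - o) * (s - t) + L * (s - t)^2 = (s - t) * (L * (s - o)) from by
          ring, hso]; ring
      have habs : lam * t ≤ lam * |t| := mul_le_mul_of_nonneg_left (le_abs_self t) hlam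
      rw [abs_of_pos hs0]
      linarith [key, habs]

noncomputable def softThresh {m : ℕ} (L lam : ℝ) (o : Fin m → ℝ) : Fin m → ℝ :=
  fun i => Real.sign (o i) * max (|o i| - lam / L) 0

theorem prox_step_descent {n m : ℕ}
    (A : Matrix (Fin n) (Fin m) ℝ) (b : Fin n → ℝ) (lam L : ℝ)
    (hlam : 0 ≤ lam) (hL : 0 < L)
    (hsmooth : ∀ v : Fin m → ℝ, (∑ i, (A.mulVec v i)^2) ≤ L * ∑ j, (v j)^2)
    (x : Fin m → ℝ)
    (g : Fin m → ℝ) (hg : g = A.transpose.mulVec (A.mulVec x - b))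
    (xplus : Fin m → ℝ) (hxplus : xplus = softThresh L lam (fun j => x j - g j / L))
    (G : Fin m → ℝ) (hG : G = fun j => L * (x j - xplus j)) :
    (lam * (∑ j, |x j|) + (1/2) * (∑ i, (b i - A.mulVec x i)^2))
      - (lam * (∑ j, |xplus j|) + (1/2) * (∑ i, (b i - A.mulVec xplus i)^2))
      ≥ (1/(2*L)) * ∑ j, (G j)^2 := by
  set dd : Fin m → ℝ := fun j => xplus j - x j with hdd
  have hxd : xplus = x + dd := by funext j; simp [hdd]
  have hAv : A.mulVec xplus = fun i => A.mulVec x i + A.mulVec dd i := by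
    rw [hxd, Matrix.mulVec_add]; rfl
  have point : ∀ i, (b i - A.mulVec xplus i)^2
      = (b i - A.mulVec x i)^2 - 2*((b i - A.mulVec x i) * A.mulVec dd i)
        + (A.mulVec dd i)^2 := by
    intro i; simp only [hAv]; ring
  have expand : ∑ i, (b i - A.mulVec xplus i)^2
      = ∑ i, (b i - A.mulVec x i)^2 - 2 * ∑ i, ((b i - A.mulVec x i) * A.mulVec dd i)
        + ∑ i, (A.mulVec dd i)^2 := by
    calc ∑ i, (b i - A.mulVec xplus i)^2
        = ∑ i, ((b i - A.mulVec x i)^2 - 2*((b i - A.mulVec x i) * A.mulVec dd i)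
            + (A.mulVec dd i)^2) := Finset.sum_congr rfl (fun i _ => point i)
      _ = _ := by
          rw [Finset.sum_add_distrib, Finset.sum_sub_distrib, ← Finset.mul_sum]
  have adj : ∑ j, g j * (xplus j - x j)
      = ∑ i, (A.mulVec x i - b i) * A.mulVec dd i := by
    have h1 : dotProduct (A.transpose.mulVec (A.mulVec x - b)) dd
        = dotProduct (A.mulVec x - b) (A.mulVec dd) := by
      rw [Matrix.mulVec_transpose, ← Matrix.dotProduct_mulVec]
    rw [hg]
    simpa [dotProduct, Pi.sub_apply, hdd] using h1
  have smooth := hsmooth dd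
  have hd2 : ∑ j, (dd j)^2 = ∑ j, (xplus j - x j)^2 := rfl
  have negadj : ∑ i, (A.mulVec x i - b i) * A.mulVec dd i
      = -∑ i, ((b i - A.mulVec x i) * A.mulVec dd i) := by
    rw [← Finset.sum_neg_distrib]
    exact Finset.sum_congr rfl (fun i _ => by ring)
  have sumkey : L * ∑ j, (xplus j - x j)^2
      ≤ ∑ j, (lam * |x j| - lam * |xplus j| - g j * (xplus j - x j)) := by
    rw [Finset.mul_sum]
    apply Finset.sum_le_sum
    intro j _
    have hx : xplus j = Real.sign (x j - g j / L)
        * max (|x j - g j / L| - lam / L) 0 := by rw [hxplus]; rfl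
    have hsc := scalar_key lam L (x j - g j / L) (x j) hlam hL
    rw [← hx] at hsc
    have e : L * (x j - (x j - g j / L)) * (xplus j - x j)
        = g j * (xplus j - x j) := by field_simp; ring
    linarith [hsc, e]
  have hGsum : ∑ j, (G j)^2 = L^2 * ∑ j, (xplus j - x j)^2 := by
    rw [hG, Finset.mul_sum]
    exact Finset.sum_congr rfl (fun j _ => by ring)
  have sum_split : ∑ j, (lam * |x j| - lam * |xplus j| - g j * (xplus j - x j))
      = lam * ∑ j, |x j| - lam * ∑ j, |xplus j| - ∑ j, g j * (xplus j - x j) := by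
    rw [Finset.sum_sub_distrib, Finset.sum_sub_distrib, Finset.mul_sum, Finset.mul_sum]
  rw [ge_iff_le, hGsum, expand]
  have hhalf : 1/(2*L) * (L^2 * ∑ j, (xplus j - x j)^2)
      = (L/2) * ∑ j, (xplus j - x j)^2 := by
    field_simp
  rw [hhalf]
  linarith [sumkey, smooth, adj, sum_split, hd2, negadj]
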